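/- For n > 1, the four quadratic symplectic traces r_1(Q) = Q_{ijk}Q_{pql}ω^{ik}ω^{jp}ω^{ql}, r_2(Q) = Q_{ijk}Q_{pql}ω^{ij}ω^{kp}ω^{ql}, r_3(Q) = Q_{ijk}Q_{pql}ω^{ik}ω^{jl}ω^{pq}, r_4(Q) = Q_{ijk}Q_{pql}ω^{iq}ω^{jl}ω^{kp} are linearly independent functionals of 3-tensors Q (i.e. linearly independent as quadratic forms on V⊗V⊗V). -/

import Mathlib

set_option synthInstance.maxHeartbeats 1000000
set_option maxHeartbeats 1000000

open Matrix

noncomputable section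

/-- A general quadratic symplectic trace of a 3-tensor `Q`: the contraction of
`Q ⊗ Q`, with its six indices rearranged by a permutation `σ`, against three
copies of the inverse symplectic matrix `W = (ω^{ij})`. -/
def qtrace {m : ℕ} (W : Matrix (Fin m) (Fin m) ℝ) (σ : Equiv.Perm (Fin 6))
    (Q : Fin m → Fin m → Fin m → ℝ) : ℝ :=
  ∑ f : Fin 6 → Fin m,
    Q (f (σ 0)) (f (σ 1)) (f (σ 2)) * Q (f (σ 3)) (f (σ 4)) (f (σ 5)) *
      W (f 0) (f 1) * W (f 2) (f 3) * W (f 4) (f 5)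

/-- `r₁(Q) = Q_{ijk}Q_{pql} ω^{ik}ω^{jp}ω^{ql}`. -/
def r₁ {m : ℕ} (W : Matrix (Fin m) (Fin m) ℝ)
    (Q : Fin m → Fin m → Fin m → ℝ) : ℝ :=
  ∑ i, ∑ j, ∑ k, ∑ p, ∑ q, ∑ l, Q i j k * Q p q l * W i k * W j p * W q l

/-- `r₂(Q) = Q_{ijk}Q_{pql} ω^{ij}ω^{kp}ω^{ql}`. -/
def r₂ {m : ℕ} (W : Matrix (Fin m) (Fin m) ℝ)
    (Q : Fin m → Fin m → Fin m → ℝ) : ℝ :=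
  ∑ i, ∑ j, ∑ k, ∑ p, ∑ q, ∑ l, Q i j k * Q p q l * W i j * W k p * W q l

/-- `r₃(Q) = Q_{ijk}Q_{pql} ω^{ik}ω^{jl}ω^{pq}`. -/
def r₃ {m : ℕ} (W : Matrix (Fin m) (Fin m) ℝ)
    (Q : Fin m → Fin m → Fin m → ℝ) : ℝ :=
  ∑ i, ∑ j, ∑ k, ∑ p, ∑ q, ∑ l, Q i j k * Q p q l * W i k * W j l * W p q

/-- `r₄(Q) = Q_{ijk}Q_{pql} ω^{iq}ω^{jl}ω^{kp}`. -/
def r₄ {m : ℕ} (W : Matrix (Fin m) (Fin m) ℝ)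
    (Q : Fin m → Fin m → Fin m → ℝ) : ℝ :=
  ∑ i, ∑ j, ∑ k, ∑ p, ∑ q, ∑ l, Q i j k * Q p q l * W i q * W j l * W k p


/-! ### Auxiliary machinery -/

/-- The pairing `x ⬝ᵥ W *ᵥ y` written as a double sum. -/
def pr {m : ℕ} (W : Matrix (Fin m) (Fin m) ℝ) (x y : Fin m → ℝ) : ℝ :=
  ∑ i, ∑ j, x i * W i j * y j

lemma pr_skew {m : ℕ} {W : Matrix (Fin m) (Fin m) ℝ} (h : Wᵀ = -W)
    (x y : Fin m → ℝ) : pr W x y = - pr W y x := by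
  unfold pr
  rw [Finset.sum_comm, ← Finset.sum_neg_distrib]
  refine Finset.sum_congr rfl fun j _ => ?_
  rw [← Finset.sum_neg_distrib]
  refine Finset.sum_congr rfl fun i _ => ?_
  have : W i j = -(W j i) := by
    have := congrFun (congrFun h j) i
    simpa [Matrix.transpose_apply] using this
  rw [this]; ring

lemma pr_self {m : ℕ} {W : Matrix (Fin m) (Fin m) ℝ} (h : Wᵀ = -W)
    (x : Fin m → ℝ) : pr W x x = 0 := by
  have := pr_skew h x x; linarith

lemma pr_add_right {m : ℕ} (W : Matrix (Fin m) (Fin m) ℝ) (x y z : Fin m → ℝ) :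
    pr W x (y + z) = pr W x y + pr W x z := by
  simp [pr, mul_add, Finset.sum_add_distrib]

lemma pr_smul_right {m : ℕ} (W : Matrix (Fin m) (Fin m) ℝ) (r : ℝ) (x y : Fin m → ℝ) :
    pr W x (r • y) = r * pr W x y := by
  simp only [pr, Pi.smul_apply, smul_eq_mul, Finset.mul_sum]
  refine Finset.sum_congr rfl fun i _ => Finset.sum_congr rfl fun j _ => by ring

lemma pr_mulVec {m : ℕ} (W : Matrix (Fin m) (Fin m) ℝ) (x y : Fin m → ℝ) :
    pr W x y = x ⬝ᵥ (W *ᵥ y) := by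
  simp [pr, dotProduct, Matrix.mulVec, Finset.mul_sum, mul_assoc]

lemma pr_single_right {m : ℕ} (W : Matrix (Fin m) (Fin m) ℝ) (x : Fin m → ℝ) (k : Fin m) :
    pr W x (Pi.single k 1) = ∑ i, x i * W i k := by
  unfold pr
  refine Finset.sum_congr rfl fun i _ => ?_
  rw [Finset.sum_eq_single k]
  · simp
  · intro j _ hj; simp [Pi.single_apply, hj]
  · simp

/-! ### Factorization of the traces on rank-one tensors -/

lemma fac1 {m : ℕ} (W : Matrix (Fin m) (Fin m) ℝ) (u v w u' v' w' : Fin m → ℝ) :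
    (∑ i, ∑ j, ∑ k, ∑ p, ∑ q, ∑ l,
      (u i * v j * w k) * (u' p * v' q * w' l) * W i k * W j p * W q l) =
    pr W v' w' * pr W v u' * pr W u w := by
  unfold pr
  simp only [Finset.sum_mul, Finset.mul_sum]
  conv_lhs => enter [2, x1]; rw [Finset.sum_comm]
  refine Finset.sum_congr rfl fun _ _ => Finset.sum_congr rfl fun _ _ =>
    Finset.sum_congr rfl fun _ _ => Finset.sum_congr rfl fun _ _ =>
    Finset.sum_congr rfl fun _ _ => Finset.sum_congr rfl fun _ _ => by ring

lemma fac2 {m : ℕ} (W : Matrix (Fin m) (Fin m) ℝ) (u v w u' v' w' : Fin m → ℝ) :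
    (∑ i, ∑ j, ∑ k, ∑ p, ∑ q, ∑ l,
      (u i * v j * w k) * (u' p * v' q * w' l) * W i j * W k p * W q l) =
    pr W v' w' * pr W w u' * pr W u v := by
  unfold pr
  simp only [Finset.sum_mul, Finset.mul_sum]
  refine Finset.sum_congr rfl fun _ _ => Finset.sum_congr rfl fun _ _ =>
    Finset.sum_congr rfl fun _ _ => Finset.sum_congr rfl fun _ _ =>
    Finset.sum_congr rfl fun _ _ => Finset.sum_congr rfl fun _ _ => by ring

lemma fac3 {m : ℕ} (W : Matrix (Fin m) (Fin m) ℝ) (u v w u' v' w' : Fin m → ℝ) :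
    (∑ i, ∑ j, ∑ k, ∑ p, ∑ q, ∑ l,
      (u i * v j * w k) * (u' p * v' q * w' l) * W i k * W j l * W p q) =
    pr W u' v' * pr W v w' * pr W u w := by
  unfold pr
  simp only [Finset.sum_mul, Finset.mul_sum]
  conv_lhs => enter [2, x1]; rw [Finset.sum_comm]
  conv_lhs => enter [2, x1, 2, x2, 2, x3, 2, x4]; rw [Finset.sum_comm]
  conv_lhs => enter [2, x1, 2, x2, 2, x3]; rw [Finset.sum_comm]
  refine Finset.sum_congr rfl fun _ _ => Finset.sum_congr rfl fun _ _ =>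
    Finset.sum_congr rfl fun _ _ => Finset.sum_congr rfl fun _ _ =>
    Finset.sum_congr rfl fun _ _ => Finset.sum_congr rfl fun _ _ => by ring

lemma fac4 {m : ℕ} (W : Matrix (Fin m) (Fin m) ℝ) (u v w u' v' w' : Fin m → ℝ) :
    (∑ i, ∑ j, ∑ k, ∑ p, ∑ q, ∑ l,
      (u i * v j * w k) * (u' p * v' q * w' l) * W i q * W j l * W k p) =
    pr W w u' * pr W v w' * pr W u v' := by
  unfold pr
  simp only [Finset.sum_mul, Finset.mul_sum]
  conv_lhs => enter [2, x1, 2, x2, 2, x3]; rw [Finset.sum_comm]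
  conv_lhs => enter [2, x1, 2, x2]; rw [Finset.sum_comm]
  conv_lhs => enter [2, x1]; rw [Finset.sum_comm]
  conv_lhs => enter [2, x1, 2, x2, 2, x3, 2, x4]; rw [Finset.sum_comm]
  conv_lhs => enter [2, x1, 2, x2, 2, x3]; rw [Finset.sum_comm]
  refine Finset.sum_congr rfl fun _ _ => Finset.sum_congr rfl fun _ _ =>
    Finset.sum_congr rfl fun _ _ => Finset.sum_congr rfl fun _ _ =>
    Finset.sum_congr rfl fun _ _ => Finset.sum_congr rfl fun _ _ => by ring

/-! ### Evaluation of the traces on a sum of two rank-one tensors -/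

lemma r1_two {m : ℕ} (W : Matrix (Fin m) (Fin m) ℝ) (u v w u' v' w' : Fin m → ℝ) :
    r₁ W (fun i j k => u i * v j * w k + u' i * v' j * w' k) =
      pr W v w * pr W v u * pr W u w
      + pr W v' w' * pr W v u' * pr W u w
      + pr W v w * pr W v' u * pr W u' w'
      + pr W v' w' * pr W v' u' * pr W u' w' := by
  unfold r₁
  simp only [add_mul, mul_add, Finset.sum_add_distrib]
  rw [fac1 W u v w u v w, fac1 W u v w u' v' w', fac1 W u' v' w' u v w,
    fac1 W u' v' w' u' v' w']
  ring

lemma r2_two {m : ℕ} (W : Matrix (Fin m) (Fin m) ℝ) (u v w u' v' w' : Fin m → ℝ) :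
    r₂ W (fun i j k => u i * v j * w k + u' i * v' j * w' k) =
      pr W v w * pr W w u * pr W u v
      + pr W v' w' * pr W w u' * pr W u v
      + pr W v w * pr W w' u * pr W u' v'
      + pr W v' w' * pr W w' u' * pr W u' v' := by
  unfold r₂
  simp only [add_mul, mul_add, Finset.sum_add_distrib]
  rw [fac2 W u v w u v w, fac2 W u v w u' v' w', fac2 W u' v' w' u v w,
    fac2 W u' v' w' u' v' w']
  ring

lemma r3_two {m : ℕ} (W : Matrix (Fin m) (Fin m) ℝ) (u v w u' v' w' : Fin m → ℝ) :
    r₃ W (fun i j k => u i * v j * w k + u' i * v' j * w' k) =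
      pr W u v * pr W v w * pr W u w
      + pr W u' v' * pr W v w' * pr W u w
      + pr W u v * pr W v' w * pr W u' w'
      + pr W u' v' * pr W v' w' * pr W u' w' := by
  unfold r₃
  simp only [add_mul, mul_add, Finset.sum_add_distrib]
  rw [fac3 W u v w u v w, fac3 W u v w u' v' w', fac3 W u' v' w' u v w,
    fac3 W u' v' w' u' v' w']
  ring

lemma r4_two {m : ℕ} (W : Matrix (Fin m) (Fin m) ℝ) (u v w u' v' w' : Fin m → ℝ) :
    r₄ W (fun i j k => u i * v j * w k + u' i * v' j * w' k) =
      pr W w u * pr W v w * pr W u v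
      + pr W w u' * pr W v w' * pr W u v'
      + pr W w' u * pr W v' w * pr W u' v
      + pr W w' u' * pr W v' w' * pr W u' v' := by
  unfold r₄
  simp only [add_mul, mul_add, Finset.sum_add_distrib]
  rw [fac4 W u v w u v w, fac4 W u v w u' v' w', fac4 W u' v' w' u v w,
    fac4 W u' v' w' u' v' w']
  ring

/-! ### Skew-symmetry of the inverse, and a pair of symplectic planes -/

lemma inv_skew {m : ℕ} (Ω : Matrix (Fin m) (Fin m) ℝ)
    (hskew : Ωᵀ = -Ω) (hinv : IsUnit Ω.det) : (Ω⁻¹)ᵀ = -(Ω⁻¹) := by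
  rw [Matrix.transpose_nonsing_inv, hskew]
  refine Matrix.inv_eq_right_inv ?_
  rw [Matrix.neg_mul, Matrix.mul_neg, neg_neg, Matrix.mul_nonsing_inv Ω hinv]

lemma exists_pairs {m : ℕ} (hm : 4 ≤ m) (Ω : Matrix (Fin m) (Fin m) ℝ)
    (hskew : Ωᵀ = -Ω) (hinv : IsUnit Ω.det) :
    ∃ a1 a2 b1 b2 : Fin m → ℝ,
      pr Ω⁻¹ a1 a2 = 1 ∧ pr Ω⁻¹ b1 b2 = 1 ∧ pr Ω⁻¹ a1 b1 = 0 ∧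
      pr Ω⁻¹ a1 b2 = 0 ∧ pr Ω⁻¹ a2 b1 = 0 ∧ pr Ω⁻¹ a2 b2 = 0 := by
  have hWskew : (Ω⁻¹)ᵀ = -(Ω⁻¹) := inv_skew Ω hskew hinv
  -- nondegeneracy
  have key : ∀ x : Fin m → ℝ, (∀ k, pr Ω⁻¹ x (Pi.single k 1) = 0) → x = 0 := by
    intro x hx
    have hxW : x ᵥ* Ω⁻¹ = 0 := by
      funext k
      have := hx k
      rw [pr_single_right] at this
      simpa [Matrix.vecMul, dotProduct] using this
    have h2 : x ᵥ* Ω⁻¹ ᵥ* Ω = x := by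
      rw [Matrix.vecMul_vecMul, Matrix.nonsing_inv_mul Ω hinv, Matrix.vecMul_one]
    rw [← h2, hxW, Matrix.zero_vecMul]
  set i0 : Fin m := ⟨0, by omega⟩ with hi0
  set a1 : Fin m → ℝ := Pi.single i0 1 with ha1
  set a2 : Fin m → ℝ := Ω *ᵥ a1 with ha2
  have h12 : pr Ω⁻¹ a1 a2 = 1 := by
    rw [pr_mulVec, ha2, Matrix.mulVec_mulVec, Matrix.nonsing_inv_mul Ω hinv,
      Matrix.one_mulVec]
    simp [ha1, dotProduct, Pi.single_apply]
  have h21 : pr Ω⁻¹ a2 a1 = -1 := by rw [pr_skew hWskew, h12]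
  have h11 : pr Ω⁻¹ a1 a1 = 0 := pr_self hWskew a1
  have h22 : pr Ω⁻¹ a2 a2 = 0 := pr_self hWskew a2
  set c : Fin m → ℝ := fun j => pr Ω⁻¹ a1 (Pi.single j 1) with hc
  set d : Fin m → ℝ := fun j => pr Ω⁻¹ a2 (Pi.single j 1) with hd
  set f : Fin m → (Fin m → ℝ) :=
    fun j => Pi.single j 1 + (-(c j)) • a2 + (d j) • a1 with hf
  have pa1f : ∀ j, pr Ω⁻¹ a1 (f j) = 0 := by
    intro j
    rw [hf]
    simp only [pr_add_right, pr_smul_right, h12, h11, ← hc]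
    ring
  have pa2f : ∀ j, pr Ω⁻¹ a2 (f j) = 0 := by
    intro j
    rw [hf]
    simp only [pr_add_right, pr_smul_right, h21, h22, ← hd]
    ring
  by_cases hex : ∃ j k, pr Ω⁻¹ (f j) (f k) ≠ 0
  · obtain ⟨j, k, hjk⟩ := hex
    refine ⟨a1, a2, f j, (pr Ω⁻¹ (f j) (f k))⁻¹ • f k, h12, ?_, ?_, ?_, ?_, ?_⟩
    · rw [pr_smul_right, inv_mul_cancel₀ hjk]
    · exact pa1f j
    · rw [pr_smul_right, pa1f k, mul_zero]
    · exact pa2f j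
    · rw [pr_smul_right, pa2f k, mul_zero]
  · exfalso
    push_neg at hex
    have hf0 : ∀ j, f j = 0 := by
      intro j
      apply key
      intro k
      have hek : (Pi.single k 1 : Fin m → ℝ) = f k + (c k) • a2 + (-(d k)) • a1 := by
        rw [hf]
        abel_nf
        simp
        abel
      rw [hek, pr_add_right, pr_add_right, pr_smul_right, pr_smul_right, hex j k]
      have hfa1 : pr Ω⁻¹ (f j) a1 = 0 := by rw [pr_skew hWskew, pa1f j, neg_zero]
      have hfa2 : pr Ω⁻¹ (f j) a2 = 0 := by rw [pr_skew hWskew, pa2f j, neg_zero]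
      rw [hfa1, hfa2]; ring
    have hcoord : ∀ j t : Fin m,
        (Pi.single j 1 : Fin m → ℝ) t + (-(c j)) * a2 t + (d j) * a1 t = 0 := by
      intro j t
      have := congrFun (hf0 j) t
      simpa [hf, neg_mul] using this
    set j1 : Fin m := ⟨1, by omega⟩ with hj1
    set j2 : Fin m := ⟨2, by omega⟩ with hj2
    have ha1t : ∀ t : Fin m, t ≠ i0 → a1 t = 0 := by
      intro t ht; rw [ha1]; exact Pi.single_eq_of_ne ht 1
    have hne10 : j1 ≠ i0 := by rw [hj1, hi0]; simp [Fin.ext_iff]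
    have hne20 : j2 ≠ i0 := by rw [hj2, hi0]; simp [Fin.ext_iff]
    have hne12 : j1 ≠ j2 := by rw [hj1, hj2]; simp [Fin.ext_iff]
    have e11 := hcoord j1 j1
    have e22 := hcoord j2 j2
    have e12 := hcoord j1 j2
    have e21 := hcoord j2 j1
    rw [ha1t j1 hne10] at e11 e21
    rw [ha1t j2 hne20] at e22 e12
    simp only [Pi.single_eq_same, mul_zero, add_zero] at e11 e22
    rw [Pi.single_eq_of_ne (Ne.symm hne12)] at e12
    rw [Pi.single_eq_of_ne hne12] at e21
    simp only [mul_zero, add_zero, zero_add] at e12 e21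
    nlinarith [e11, e22, e12, e21, sq_nonneg (c j1 * a2 j2), sq_nonneg (c j2 * a2 j1)]

/-- For `n > 1`, the four quadratic symplectic traces `r₁, r₂, r₃, r₄` are
linearly independent as quadratic forms on the space of 3-tensors. -/
theorem stmt14 (n : ℕ) (hn : 2 ≤ n) (Ω : Matrix (Fin (2 * n)) (Fin (2 * n)) ℝ)
    (hskew : Ωᵀ = -Ω) (hinv : IsUnit Ω.det) :
    ∀ a b c d : ℝ,
      (∀ Q : Fin (2 * n) → Fin (2 * n) → Fin (2 * n) → ℝ,
        a * r₁ Ω⁻¹ Q + b * r₂ Ω⁻¹ Q + c * r₃ Ω⁻¹ Q + d * r₄ Ω⁻¹ Q = 0) →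
      a = 0 ∧ b = 0 ∧ c = 0 ∧ d = 0 := by
  intro a b c d hQ
  have hm : 4 ≤ 2 * n := by omega
  obtain ⟨a1, a2, b1, b2, h12, h34, h13, h14, h23, h24⟩ :=
    exists_pairs hm Ω hskew hinv
  have hWskew : (Ω⁻¹)ᵀ = -(Ω⁻¹) := inv_skew Ω hskew hinv
  have h21 : pr Ω⁻¹ a2 a1 = -1 := by rw [pr_skew hWskew, h12]
  have h43 : pr Ω⁻¹ b2 b1 = -1 := by rw [pr_skew hWskew, h34]
  have h31 : pr Ω⁻¹ b1 a1 = 0 := by rw [pr_skew hWskew, h13, neg_zero]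
  have h41 : pr Ω⁻¹ b2 a1 = 0 := by rw [pr_skew hWskew, h14, neg_zero]
  have h32 : pr Ω⁻¹ b1 a2 = 0 := by rw [pr_skew hWskew, h23, neg_zero]
  have h42 : pr Ω⁻¹ b2 a2 = 0 := by rw [pr_skew hWskew, h24, neg_zero]
  have s1 : pr Ω⁻¹ a1 a1 = 0 := pr_self hWskew a1
  have s2 : pr Ω⁻¹ a2 a2 = 0 := pr_self hWskew a2
  have s3 : pr Ω⁻¹ b1 b1 = 0 := pr_self hWskew b1
  have s4 : pr Ω⁻¹ b2 b2 = 0 := pr_self hWskew b2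
  have eA := hQ (fun i j k => a1 i * a1 j * a2 k + a2 i * b1 j * b2 k)
  have eB := hQ (fun i j k => a1 i * a2 j * a1 k + a2 i * b2 j * b1 k)
  have eC := hQ (fun i j k => b1 i * b1 j * a2 k + b2 i * a1 j * b2 k)
  have eD := hQ (fun i j k => a2 i * a1 j * b1 k + b1 i * b2 j * b2 k)
  rw [r1_two Ω⁻¹ a1 a1 a2 a2 b1 b2, r2_two Ω⁻¹ a1 a1 a2 a2 b1 b2,
    r3_two Ω⁻¹ a1 a1 a2 a2 b1 b2, r4_two Ω⁻¹ a1 a1 a2 a2 b1 b2] at eA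
  rw [r1_two Ω⁻¹ a1 a2 a1 a2 b2 b1, r2_two Ω⁻¹ a1 a2 a1 a2 b2 b1,
    r3_two Ω⁻¹ a1 a2 a1 a2 b2 b1, r4_two Ω⁻¹ a1 a2 a1 a2 b2 b1] at eB
  rw [r1_two Ω⁻¹ b1 b1 a2 b2 a1 b2, r2_two Ω⁻¹ b1 b1 a2 b2 a1 b2,
    r3_two Ω⁻¹ b1 b1 a2 b2 a1 b2, r4_two Ω⁻¹ b1 b1 a2 b2 a1 b2] at eC
  rw [r1_two Ω⁻¹ a2 a1 b1 b1 b2 b2, r2_two Ω⁻¹ a2 a1 b1 b1 b2 b2,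
    r3_two Ω⁻¹ a2 a1 b1 b1 b2 b2, r4_two Ω⁻¹ a2 a1 b1 b1 b2 b2] at eD
  simp only [h12, h34, h13, h14, h23, h24, h21, h43, h31, h41, h32, h42,
    s1, s2, s3, s4, mul_zero, zero_mul, mul_one, one_mul, add_zero, zero_add,
    mul_neg, neg_mul, neg_zero, neg_neg] at eA eB eC eD
  refine ⟨by linarith, by linarith, by linarith, by linarith⟩
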